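/- Fix n ≥ 1 and set b = ⌊log₂ n⌋ + 2. In ℤ[X₀, …, X_{b−1}], let I be the ideal generated by Xᵢ² − (2·Xᵢ + X_{i+1}) for 0 ≤ i ≤ b−2 together with X_{b−1}². If g is a multilinear polynomial (every exponent in every monomial of its support is at most 1) with (1 + X₀)ⁿ − g ∈ I, then evaluating g at X₀ = X₁ = ⋯ = X_{b−1} = 1 gives the central binomial coefficient C(2n, n) = (2n)!/(n!)². -/

import Mathlib

open MvPolynomial

/-- The generators of the ideal `I`: `Xᵢ² − (2Xᵢ + X_{i+1})` for `i ≤ b-2`, and `X_{b-1}²`. -/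
noncomputable def gens (b : ℕ) : Fin b → MvPolynomial (Fin b) ℤ := fun i =>
  if h : (i : ℕ) + 1 < b then X i ^ 2 - (2 * X i + X ⟨(i : ℕ) + 1, h⟩) else X i ^ 2

namespace Stmt3Aux
open LaurentPolynomial

def u (m : ℤ) : ℤ := if m % 3 = 0 then m + 1 else if m % 3 = 2 then -(m + 1) else 0

lemma u_rec (m : ℤ) : u (m+2) + u (m-2) + 2 * u (m+1) + 2 * u (m-1) + 3 * u m = 0 := by
  simp only [u]; split_ifs <;> omega

def t (M : ℕ) (j : ℤ) : ℤ := if (M:ℤ) ∣ j then u (j / M) else 0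

lemma t_zero (M : ℕ) : t M 0 = 1 := by simp [t, u]

lemma t_not_dvd {M : ℕ} {j : ℤ} (h : ¬ (M:ℤ) ∣ j) : t M j = 0 := if_neg h

lemma t_window {M : ℕ} (hM : 0 < M) {j : ℤ} (h : |j| < 2 * M) (hj : j ≠ 0) : t M j = 0 := by
  unfold t
  split_ifs with hd
  · obtain ⟨m, rfl⟩ := hd
    have hM' : (0:ℤ) < M := by exact_mod_cast hM
    rw [Int.mul_ediv_cancel_left _ hM'.ne']
    have habs : |(M:ℤ)| * |m| < 2 * M := by rw [← abs_mul]; exact h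
    rw [abs_of_pos hM'] at habs
    have hm1 : |m| ≤ 1 := by nlinarith [abs_nonneg m]
    have hm0 : m ≠ 0 := by rintro rfl; simp at hj
    have : m = -1 ∨ m = 1 := by
      rcases abs_le.mp hm1 with ⟨h1, h2⟩; omega
    rcases this with rfl | rfl <;> decide
  · rfl

lemma t_rec (M : ℕ) (hM : 0 < M) (a : ℤ) :
    t M (a + 2*M) + t M (a + -(2*M)) + 2 * t M (a + M) + 2 * t M (a + -(M:ℤ)) + 3 * t M (a + 0) = 0 := by
  have hM' : ((M:ℤ)) ≠ 0 := by exact_mod_cast hM.ne'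
  by_cases h : (M:ℤ) ∣ a
  · obtain ⟨m, rfl⟩ := h
    rw [show (M:ℤ)*m + 2*M = M*(m+2) by ring, show (M:ℤ)*m + -(2*M) = M*(m-2) by ring,
        show (M:ℤ)*m + M = M*(m+1) by ring, show (M:ℤ)*m + -(M:ℤ) = M*(m-1) by ring,
        add_zero]
    simp only [t, Int.mul_ediv_cancel_left _ hM', dvd_mul_right, if_pos]
    exact u_rec m
  · have h5 : ∀ k : ℤ, ¬ (M:ℤ) ∣ (a + M * k) := by
      intro k hk
      exact h (by simpa using hk.sub (Dvd.intro k rfl))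
    rw [show a + 2*(M:ℤ) = a + M * 2 by ring, show a + -(2*(M:ℤ)) = a + M * (-2) by ring,
        show a + (M:ℤ) = a + M * 1 by ring, show a + -(M:ℤ) = a + M * (-1) by ring, add_zero]
    rw [t_not_dvd (h5 2), t_not_dvd (h5 (-2)), t_not_dvd (h5 1), t_not_dvd (h5 (-1)), t_not_dvd h]
    ring

noncomputable def tau (M : ℕ) : LaurentPolynomial ℤ →ₗ[ℤ] ℤ :=
  Finsupp.lsum ℤ (fun j => LinearMap.toSpanSingleton ℤ ℤ (t M j)) ∘ₗ
    (AddMonoidAlgebra.coeffLinearEquiv ℤ).toLinearMap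

lemma tau_single (M : ℕ) (j : ℤ) (c : ℤ) : tau M (AddMonoidAlgebra.single j c) = c * t M j := by
  rw [tau]
  show Finsupp.lsum ℤ _ (Finsupp.single j c) = _
  erw [Finsupp.lsum_single]
  simp [LinearMap.toSpanSingleton_apply, smul_eq_mul]

lemma T_eq (e : ℤ) : (T e : LaurentPolynomial ℤ) = AddMonoidAlgebra.single e 1 := rfl

lemma tau_mul_T (M : ℕ) (f : LaurentPolynomial ℤ) (e : ℤ) :
    tau M (f * T e) = f.coeff.sum (fun j c => c * t M (j + e)) := by
  induction f using AddMonoidAlgebra.induction_linear with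
  | zero => simp
  | add f g hf hg =>
      rw [add_mul, map_add, hf, hg]
      exact (Finsupp.sum_add_index' (fun j => zero_mul (t M (j + e)))
        (fun j c d => add_mul c d (t M (j + e)))).symm
  | single a c =>
      rw [T_eq, AddMonoidAlgebra.single_mul_single, mul_one, tau_single]
      exact (Finsupp.sum_single_index (h := fun j c => c * t M (j + e)) (zero_mul _)).symm

lemma tau_apply (M : ℕ) (f : LaurentPolynomial ℤ) :
    tau M f = f.coeff.sum (fun j c => c * t M j) := by
  have := tau_mul_T M f 0
  simpa [T_zero] using this


noncomputable def Agen (k : ℕ) : LaurentPolynomial ℤ := T ((2:ℤ)^k) + T (-((2:ℤ)^k)) + 1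

lemma sq_expand (x : ℤ) : ((T x + T (-x) + 1 : LaurentPolynomial ℤ))^2
    = T (2*x) + T (-(2*x)) + 2 * T x + 2 * T (-x) + 3 := by
  have h1 : (T x : LaurentPolynomial ℤ) * T (-x) = 1 := by
    rw [← T_add, add_neg_cancel, T_zero]
  have h2 : (T x : LaurentPolynomial ℤ) ^ 2 = T (2*x) := by rw [T_pow]; norm_num
  have h3 : (T (-x) : LaurentPolynomial ℤ) ^ 2 = T (-(2*x)) := by rw [T_pow]; ring_nf
  linear_combination h2 + h3 + 2 * h1

lemma tau_mul_S (M : ℕ) (hM : 0 < M) (q : LaurentPolynomial ℤ) :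
    tau M (q * (T (2*(M:ℤ)) + T (-(2*(M:ℤ))) + 2 * T (M:ℤ) + 2 * T (-(M:ℤ)) + 3)) = 0 := by
  have expand : q * (T (2*(M:ℤ)) + T (-(2*(M:ℤ))) + 2 * T (M:ℤ) + 2 * T (-(M:ℤ)) + 3)
      = q * T (2*(M:ℤ)) + q * T (-(2*(M:ℤ))) + q * T (M:ℤ) + q * T (M:ℤ)
        + q * T (-(M:ℤ)) + q * T (-(M:ℤ)) + q * T 0 + q * T 0 + q * T 0 := by
    rw [T_zero]; ring
  rw [expand]
  simp only [map_add, tau_mul_T, Finsupp.sum]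
  rw [← Finset.sum_add_distrib, ← Finset.sum_add_distrib, ← Finset.sum_add_distrib,
      ← Finset.sum_add_distrib, ← Finset.sum_add_distrib, ← Finset.sum_add_distrib,
      ← Finset.sum_add_distrib, ← Finset.sum_add_distrib]
  apply Finset.sum_eq_zero
  intro j hj
  linear_combination (q.coeff j) * t_rec M hM j

/-- the set of Laurent polynomials y such that τ(q*y)=0 for all q, as an ideal -/
noncomputable def annIdeal (M : ℕ) : Ideal (LaurentPolynomial ℤ) where
  carrier := {y | ∀ q, tau M (q * y) = 0}
  add_mem' := by intro x y hx hy q; rw [mul_add, map_add, hx, hy, add_zero]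
  zero_mem' := by intro q; rw [mul_zero, map_zero]
  smul_mem' := by
    intro c x hx q
    rw [smul_eq_mul, show q * (c * x) = (q * c) * x by ring]
    exact hx _

noncomputable def P (S : Finset ℕ) : LaurentPolynomial ℤ := ∏ i ∈ S, Agen i

lemma geo_sum (a : ℕ) : ∑ i ∈ Finset.range a, (2:ℤ)^i = 2^a - 1 := by
  induction a with
  | zero => simp
  | succ a ih => rw [Finset.sum_range_succ, ih]; ring

lemma sum_pow_le {S : Finset ℕ} {a : ℕ} (h : ∀ i ∈ S, i < a) :
    ∑ i ∈ S, (2:ℤ)^i ≤ 2^a - 1 := by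
  rw [← geo_sum]
  apply Finset.sum_le_sum_of_subset_of_nonneg
  · intro i hi; exact Finset.mem_range.mpr (h i hi)
  · intro i _ _; positivity

lemma P_coeff (S : Finset ℕ) :
    (P S).coeff 0 = 1 ∧ ∀ j : ℤ, (∑ i ∈ S, (2:ℤ)^i) < |j| → (P S).coeff j = 0 := by
  induction S using Finset.induction_on_max with
  | empty =>
      constructor
      · rw [P, Finset.prod_empty]
        show (1 : AddMonoidAlgebra ℤ ℤ).coeff 0 = 1
        rw [AddMonoidAlgebra.one_def, AddMonoidAlgebra.coeff_single, Finsupp.single_apply]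
        simp
      · intro j hj
        simp only [Finset.sum_empty] at hj
        have hj0 : j ≠ 0 := by intro h; rw [h] at hj; simp at hj
        rw [P, Finset.prod_empty]
        show (1 : AddMonoidAlgebra ℤ ℤ).coeff j = 0
        rw [AddMonoidAlgebra.one_def, AddMonoidAlgebra.coeff_single, Finsupp.single_apply, if_neg (fun h => hj0 h.symm)]
  | insert a S ha ih =>
      have hanotin : a ∉ S := fun h => absurd (ha a h) (lt_irrefl a)
      have hxpos : (0:ℤ) < 2^a := by positivity
      have hbound : ∑ i ∈ S, (2:ℤ)^i ≤ 2^a - 1 := sum_pow_le ha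
      have hmul : ∀ j : ℤ, (P (insert a S)).coeff j = (P S).coeff (j - 2^a) + (P S).coeff (j + 2^a) + (P S).coeff j := by
        intro j
        have h1 : P (insert a S) = P S * T ((2:ℤ)^a) + P S * T (-((2:ℤ)^a)) + P S := by
          rw [show P (insert a S) = Agen a * P S from Finset.prod_insert hanotin, Agen]
          ring
        rw [h1, T_eq, T_eq]
        rw [AddMonoidAlgebra.coeff_add, AddMonoidAlgebra.coeff_add, Finsupp.add_apply, Finsupp.add_apply,
          AddMonoidAlgebra.coeff_mul_single_apply, AddMonoidAlgebra.coeff_mul_single_apply]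
        rw [mul_one, mul_one, neg_neg, ← sub_eq_add_neg]
      constructor
      · rw [hmul]
        rw [ih.2 (0 - 2^a) (by rw [zero_sub, abs_neg, abs_of_pos hxpos]; linarith),
            ih.2 (0 + 2^a) (by rw [zero_add, abs_of_pos hxpos]; linarith), ih.1]
        ring
      · intro j hj
        rw [Finset.sum_insert hanotin] at hj
        have habs : ∑ i ∈ S, (2:ℤ)^i < |j| - 2^a := by linarith
        rw [hmul]
        rw [ih.2 (j - 2^a) (lt_of_lt_of_le habs (by
              have := abs_sub_abs_le_abs_sub j ((2:ℤ)^a)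
              rw [abs_of_pos hxpos] at this; linarith)),
            ih.2 (j + 2^a) (lt_of_lt_of_le habs (by
              have := abs_sub_abs_le_abs_sub j (-(2:ℤ)^a)
              rw [abs_neg, abs_of_pos hxpos, sub_neg_eq_add] at this; linarith)),
            ih.2 j (by linarith)]
        ring


lemma tau_P (M : ℕ) (hM : 0 < M) (S : Finset ℕ)
    (hS : ∑ i ∈ S, (2:ℤ)^i < 2*M) : tau M (P S) = 1 := by
  obtain ⟨h0, hbd⟩ := P_coeff S
  rw [tau_apply, Finsupp.sum]
  have h0mem : (0:ℤ) ∈ (P S).coeff.support := Finsupp.mem_support_iff.mpr (by rw [h0]; norm_num)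
  rw [Finset.sum_eq_single_of_mem 0 h0mem ?side]
  · rw [h0, t_zero, one_mul]
  · intro j hj hj0
    have hne := Finsupp.mem_support_iff.mp hj
    have hb : |j| ≤ ∑ i ∈ S, (2:ℤ)^i := by
      by_contra hc
      exact hne (hbd j (by linarith [not_le.mp hc]))
    rw [t_window hM (by linarith) hj0, mul_zero]

lemma tau_binom (M n : ℕ) (hM : 0 < M) (hn : n < M) :
    tau M ((1 + (T 1 + T (-1) + 1) : LaurentPolynomial ℤ) ^ n) = (2*n).choose n := by
  have h1 : (T (-1) : LaurentPolynomial ℤ) * T 1 = 1 := by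
    rw [← T_add, neg_add_cancel, T_zero]
  have h2 : (T 1 : LaurentPolynomial ℤ) ^ 2 = T 2 := by rw [T_pow]; norm_num
  have h3 : (T (-1) : LaurentPolynomial ℤ) * T 2 = T 1 := by rw [← T_add]; norm_num
  have key : (1 + (T 1 + T (-1) + 1) : LaurentPolynomial ℤ) = T (-1) * (1 + T 1)^2 := by
    linear_combination -(2:LaurentPolynomial ℤ) * h1 - T (-1) * h2 - h3
  have expand : ((1 + (T 1 + T (-1) + 1) : LaurentPolynomial ℤ))^n
      = ∑ k ∈ Finset.range (2*n+1), AddMonoidAlgebra.single ((k:ℤ) - n) (((2*n).choose k : ℤ)) := by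
    rw [key, mul_pow, ← pow_mul, T_pow, add_comm (1 : LaurentPolynomial ℤ) (T 1), add_pow,
      Finset.mul_sum]
    apply Finset.sum_congr rfl
    intro k hk
    rw [one_pow, mul_one, T_pow, single_eq_C_mul_T,
      show (LaurentPolynomial.C (((2*n).choose k : ℤ)) : LaurentPolynomial ℤ) = (((2*n).choose k : ℕ) : LaurentPolynomial ℤ) from
        map_natCast LaurentPolynomial.C _,
      show ((k:ℤ) - n) = (n:ℤ)*(-1) + (k:ℤ)*1 by ring, T_add]
    ring
  rw [expand, map_sum]
  simp only [tau_single]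
  rw [Finset.sum_eq_single_of_mem n (Finset.mem_range.mpr (by omega))]
  · rw [sub_self, t_zero, mul_one]
  · intro k hk hkn
    have hk2 : k ≤ 2*n := by have := Finset.mem_range.mp hk; omega
    have : ((k:ℤ) - n) ≠ 0 := by
      intro h; apply hkn; omega
    rw [t_window hM (by
        rw [abs_sub_lt_iff]; omega) this, mul_zero]

end Stmt3Aux


lemma Stmt3Aux.mem_annIdeal_iff {M : ℕ} {y : LaurentPolynomial ℤ} :
    y ∈ Stmt3Aux.annIdeal M ↔ ∀ q, Stmt3Aux.tau M (q * y) = 0 := Iff.rfl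

open Stmt3Aux LaurentPolynomial in
theorem stmt3 (n : ℕ) (hn : 1 ≤ n) (b : ℕ) (hb : b = Nat.log 2 n + 2)
    (g : MvPolynomial (Fin b) ℤ)
    (hml : ∀ m ∈ g.support, ∀ i : Fin b, m i ≤ 1)
    (hg : (1 + X (⟨0, by omega⟩ : Fin b)) ^ n - g ∈ Ideal.span (Set.range (gens b))) :
    eval (fun _ : Fin b => (1 : ℤ)) g = (2 * n).choose n := by
  classical
  have hb1 : 1 ≤ b := by omega
  set M : ℕ := 2^(b-1) with hMdef
  have hMpos : 0 < M := pow_pos (by norm_num) _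
  have hnM : n < M := by
    rw [hMdef, show b - 1 = Nat.log 2 n + 1 by omega]
    exact Nat.lt_pow_succ_log_self (by norm_num) n
  have h2M : 2 * M = 2 ^ b := by
    rw [hMdef, ← pow_succ']
    congr 1
    omega
  set φ : MvPolynomial (Fin b) ℤ →ₐ[ℤ] LaurentPolynomial ℤ :=
    aeval (fun i : Fin b => Stmt3Aux.Agen i.val) with hφ
  -- the generators map into the annihilator ideal
  have hgen : ∀ i : Fin b, φ (gens b i) ∈ Stmt3Aux.annIdeal M := by
    intro i
    unfold gens
    split_ifs with h
    · have himg : φ (X i ^ 2 - (2 * X i + X ⟨(i:ℕ)+1, h⟩))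
          = Agen (i:ℕ) ^ 2 - (2 * Agen (i:ℕ) + Agen ((i:ℕ)+1)) := by
        simp [hφ, aeval_X]
      rw [himg]
      have hzero : Agen (i:ℕ) ^ 2 - (2 * Agen (i:ℕ) + Agen ((i:ℕ)+1)) = 0 := by
        rw [Agen, Agen, sq_expand, show ((2:ℤ)^((i:ℕ)+1)) = 2 * (2:ℤ)^(i:ℕ) by ring]
        ring
      rw [hzero]
      exact (Stmt3Aux.annIdeal M).zero_mem
    · have hib : (i:ℕ) = b - 1 := by have := i.isLt; omega
      have himg : φ (X i ^ 2) = Agen (b-1) ^ 2 := by simp [hφ, aeval_X, hib]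
      rw [himg, mem_annIdeal_iff]
      intro q
      rw [Agen, sq_expand, show ((2:ℤ)^(b-1)) = (M:ℤ) by rw [hMdef]; push_cast; ring]
      exact tau_mul_S M hMpos q
  have hker : ∀ p ∈ Ideal.span (Set.range (gens b)), tau M (φ p) = 0 := by
    intro p hp
    have hspan : Ideal.span (Set.range (gens b)) ≤ Ideal.comap φ.toRingHom (Stmt3Aux.annIdeal M) := by
      rw [Ideal.span_le]
      rintro _ ⟨i, rfl⟩
      exact hgen i
    have hmem := hspan hp
    rw [Ideal.mem_comap] at hmem
    have h1 := (mem_annIdeal_iff.mp hmem) 1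
    rwa [one_mul] at h1
  -- evaluation of multilinear polynomials
  have hgval : tau M (φ g) = eval (fun _ : Fin b => (1:ℤ)) g := by
    conv_lhs => rw [g.as_sum]
    conv_rhs => rw [g.as_sum]
    rw [map_sum, map_sum, map_sum]
    apply Finset.sum_congr rfl
    intro m hm
    rw [aeval_monomial, eval_monomial]
    have hsup : ∀ i ∈ m.support, m i = 1 := fun i hi =>
      le_antisymm (hml m hm i) (Nat.one_le_iff_ne_zero.mpr (Finsupp.mem_support_iff.mp hi))
    rw [Finsupp.prod, Finsupp.prod]
    simp only [one_pow]
    rw [Finset.prod_const_one, mul_one]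
    rw [Finset.prod_congr rfl (fun i hi => by rw [hsup i hi, pow_one])]
    rw [show ∏ i ∈ m.support, Agen (i:ℕ) = P (m.support.image Fin.val) from
      (Finset.prod_image (fun x _ y _ hxy => Fin.val_injective hxy)).symm]
    have hbound : ∑ i ∈ m.support.image Fin.val, (2:ℤ)^i < 2*M := by
      have h1 : ∑ i ∈ m.support.image Fin.val, (2:ℤ)^i ≤ 2^b - 1 :=
        sum_pow_le (fun i hi => by
          obtain ⟨x, _, rfl⟩ := Finset.mem_image.mp hi
          exact x.isLt)
      have h2 : (2:ℤ) * M = 2^b := by exact_mod_cast congrArg (Nat.cast : ℕ → ℤ) h2M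
      linarith
    rw [← Algebra.smul_def, map_smul, tau_P M hMpos _ hbound, smul_eq_mul, mul_one]
  -- the binomial power
  have hpow : ∀ i0 : Fin b, (i0 : ℕ) = 0 →
      tau M (φ ((1 + X i0) ^ n)) = (2*n).choose n := by
    intro i0 hi0
    rw [map_pow, map_add, map_one]
    rw [show φ (X i0) = Agen (i0:ℕ) from by simp [hφ, aeval_X]]
    rw [hi0, show Agen 0 = T 1 + T (-1) + 1 from by rw [Agen]; norm_num]
    exact tau_binom M n hMpos hnM
  have hdiff := hker _ hg
  rw [map_sub, map_sub] at hdiff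
  have := hpow ⟨0, by omega⟩ rfl
  linarith [hgval, this, hdiff]
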